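/- Let p be an odd prime and q = p^e with e ≥ 1. Let k with 1 ≤ k ≤ q - 1 be a power of p. Then the polynomial B_k(X) = ((X+1)^(2k) − 1)·X^(q−1−k) − 2·X^(q−1) is a permutation polynomial of F_q. -/

import Mathlib

theorem stmt_6 (p e k : ℕ) (hp : p.Prime) (hodd : Odd p) (he : 1 ≤ e)
    (hk1 : 1 ≤ k) (hk2 : k ≤ p ^ e - 1) (hkpow : ∃ j : ℕ, k = p ^ j)
    (F : Type*) [Field F] [Fintype F] (hF : Fintype.card F = p ^ e) :
    Function.Bijective
      (fun x : F => ((x + 1) ^ (2 * k) - 1) * x ^ (p ^ e - 1 - k) - 2 * x ^ (p ^ e - 1)) := by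
  obtain ⟨j, hj⟩ := hkpow
  have hr : ringChar F = p := by
    obtain ⟨n, hrp, hcard⟩ := FiniteField.card F (ringChar F)
    have hdvd : ringChar F ∣ p ^ e := by
      rw [← hF, hcard]; exact dvd_pow_self _ n.pos.ne'
    exact (Nat.prime_dvd_prime_iff_eq hrp hp).mp (hrp.dvd_of_dvd_pow hdvd)
  haveI : CharP F p := hr ▸ ringChar.charP F
  haveI : Fact p.Prime := ⟨hp⟩
  have hq1 : 1 ≤ p ^ e - 1 := by
    have h3 : 3 ≤ p := by
      rcases hodd with ⟨m, hm⟩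
      have := hp.two_le; omega
    have : p ≤ p ^ e := Nat.le_self_pow (by omega) p
    omega
  have hfun : (fun x : F => ((x + 1) ^ (2 * k) - 1) * x ^ (p ^ e - 1 - k) - 2 * x ^ (p ^ e - 1))
      = fun x : F => x ^ k := by
    funext x
    by_cases hx : x = 0
    · subst hx
      simp [zero_pow (by omega : p ^ e - 1 ≠ 0), zero_pow (by omega : k ≠ 0)]
    · have h1 : x ^ (p ^ e - 1) = 1 := by
        rw [← hF]; exact FiniteField.pow_card_sub_one_eq_one x hx
      have hfrob : (x + 1) ^ k = x ^ k + 1 := by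
        subst hj; rw [add_pow_char_pow]; simp
      have h2 : (x + 1) ^ (2 * k) = (x ^ k + 1) ^ 2 := by
        rw [mul_comm 2 k, pow_mul, hfrob]
      have e1 : 2 * k + (p ^ e - 1 - k) = (p ^ e - 1) + k := by omega
      have e2 : k + (p ^ e - 1 - k) = p ^ e - 1 := by omega
      have h3 : x ^ (2 * k) * x ^ (p ^ e - 1 - k) = x ^ k := by
        rw [← pow_add, e1, pow_add, h1, one_mul]
      have h4 : x ^ k * x ^ (p ^ e - 1 - k) = 1 := by
        rw [← pow_add, e2, h1]
      have h5 : ((x ^ k + 1) ^ 2 - 1) = x ^ (2 * k) + 2 * x ^ k := by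
        rw [two_mul, pow_add]; ring
      rw [h2, h1, h5, add_mul, h3, mul_assoc, h4]
      ring
  rw [hfun]
  subst hj
  have hinj : Function.Injective (fun x : F => x ^ p ^ j) := by
    have h := iterateFrobenius_inj F p j
    intro a b hab
    exact h (by simpa [iterateFrobenius_def] using hab)
  exact Finite.injective_iff_bijective.mp hinj
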